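/- arXiv:1707.09659 — 3 statements merged into one kernel-verified Lean document; each statement's English description precedes it below -/
import Mathlib

section
/- Two-sided efficiency bound for the generalized equilibrated estimate: Let V be a real Hilbert space and G ⊆ V a closed subspace. Let g, ĝ, g_h ∈ G with g ≠ g_h, let s ∈ V with θ̂ := s − ĝ ∈ G^⊥, and suppose ‖g − ĝ‖ ≤ C·d for real numbers C, d. Then 1 ≤ (C·d)/‖g − g_h‖ + ‖s − g_h‖/‖g − g_h‖ ≤ 1 + 2·C·d/‖g − g_h‖ + ‖θ̂‖/‖g − g_h‖. -/
open scoped RealInnerProductSpace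

/-- Two-sided efficiency bound for the generalized equilibrated estimate. -/
theorem two_sided_efficiency_bound {V : Type*} [NormedAddCommGroup V]
    [InnerProductSpace ℝ V] [CompleteSpace V]
    (G : Submodule ℝ V) (hG : IsClosed (G : Set V))
    (g ghat g_h s : V) (hg : g ∈ G) (hghat : ghat ∈ G) (hgh : g_h ∈ G)
    (hne : g ≠ g_h)
    (θhat : V) (hθhat : θhat = s - ghat) (hθmem : θhat ∈ Gᗮ)
    (C d : ℝ) (hCd : ‖g - ghat‖ ≤ C * d) :
    1 ≤ (C * d) / ‖g - g_h‖ + ‖s - g_h‖ / ‖g - g_h‖ ∧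
      (C * d) / ‖g - g_h‖ + ‖s - g_h‖ / ‖g - g_h‖
        ≤ 1 + 2 * C * d / ‖g - g_h‖ + ‖θhat‖ / ‖g - g_h‖ := by
  have hN : 0 < ‖g - g_h‖ := by
    rw [norm_pos_iff]; exact sub_ne_zero.mpr hne
  have hs : s - g_h = θhat + (ghat - g_h) := by rw [hθhat]; abel
  have horth : (inner ℝ θhat (ghat - g_h) : ℝ) = 0 := by
    have := (Submodule.mem_orthogonal G θhat).mp hθmem (ghat - g_h)
      (Submodule.sub_mem G hghat hgh)
    rwa [real_inner_comm] at this
  have hsq : ‖s - g_h‖ ^ 2 = ‖θhat‖ ^ 2 + ‖ghat - g_h‖ ^ 2 := by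
    rw [hs, @norm_add_sq_real, horth]; ring
  have hle1 : ‖ghat - g_h‖ ≤ ‖s - g_h‖ := by
    nlinarith [norm_nonneg (s - g_h), norm_nonneg (ghat - g_h), norm_nonneg θhat]
  have htri : ‖g - g_h‖ ≤ ‖g - ghat‖ + ‖ghat - g_h‖ :=
    norm_sub_le_norm_sub_add_norm_sub g ghat g_h
  have hlow : ‖g - g_h‖ ≤ C * d + ‖s - g_h‖ := by linarith
  have htri2 : ‖ghat - g_h‖ ≤ ‖ghat - g‖ + ‖g - g_h‖ :=
    norm_sub_le_norm_sub_add_norm_sub ghat g g_h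
  have hgg : ‖ghat - g‖ = ‖g - ghat‖ := norm_sub_rev _ _
  have hsup : ‖s - g_h‖ ≤ ‖θhat‖ + ‖ghat - g_h‖ := by
    rw [hs]; exact norm_add_le _ _
  have hkey : C * d + ‖s - g_h‖ ≤ ‖g - g_h‖ + 2 * C * d + ‖θhat‖ := by
    have hCd0 : ‖g - ghat‖ ≤ C * d := hCd
    nlinarith [norm_nonneg (g - ghat)]
  constructor
  · rw [← add_div, le_div_iff₀ hN, one_mul]
    exact hlow
  · rw [← add_div]
    have heq : 1 + 2 * C * d / ‖g - g_h‖ + ‖θhat‖ / ‖g - g_h‖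
        = (‖g - g_h‖ + 2 * C * d + ‖θhat‖) / ‖g - g_h‖ := by
      field_simp
    rw [heq, div_le_div_iff₀ hN hN]
    nlinarith
end

section
/- Improved constant-free goal-oriented bound using Galerkin orthogonality: Let V be a real Hilbert space, G ⊆ V a closed subspace, and S ⊆ G a subspace. Let g, z ∈ G and g_h, z_h ∈ S be such that ⟪g − g_h, v⟫ = 0 for every v ∈ S. Let ϱ, ϖ ∈ V with ϱ − (g − g_h) ∈ G^⊥ and ϖ − (z − z_h) ∈ G^⊥. Then |⟪g − g_h, z⟫| ≤ ‖ϱ‖·‖ϖ‖. -/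
open scoped RealInnerProductSpace

/-- Improved constant-free goal-oriented bound using Galerkin orthogonality. -/
theorem goal_oriented_improved_bound {V : Type*} [NormedAddCommGroup V]
    [InnerProductSpace ℝ V] [CompleteSpace V]
    (G : Submodule ℝ V) (hG : IsClosed (G : Set V))
    (S : Submodule ℝ V) (hSG : S ≤ G)
    (g z : V) (hg : g ∈ G) (hz : z ∈ G)
    (g_h z_h : V) (hgh : g_h ∈ S) (hzh : z_h ∈ S)
    (hGalerkin : ∀ v ∈ S, ⟪g - g_h, v⟫ = 0)
    (ρ ϖ : V) (hρ : ρ - (g - g_h) ∈ Gᗮ) (hϖ : ϖ - (z - z_h) ∈ Gᗮ) :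
    |⟪g - g_h, z⟫| ≤ ‖ρ‖ * ‖ϖ‖ := by
  have hgG : g - g_h ∈ G := G.sub_mem hg (hSG hgh)
  have h1 : ⟪g - g_h, z⟫ = ⟪g - g_h, z - z_h⟫ := by
    rw [inner_sub_right, hGalerkin z_h hzh, sub_zero]
  have h2 : ⟪g - g_h, ϖ - (z - z_h)⟫ = 0 := (Submodule.mem_orthogonal G _).mp hϖ _ hgG
  have h3 : ⟪g - g_h, z - z_h⟫ = ⟪g - g_h, ϖ⟫ := by
    have := h2
    rw [inner_sub_right] at this
    linarith
  have h4 : ‖g - g_h‖ ≤ ‖ρ‖ := by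
    have hperp : ⟪ρ - (g - g_h), g - g_h⟫ = 0 := by
      rw [real_inner_comm]; exact (Submodule.mem_orthogonal G _).mp hρ _ hgG
    have : ‖ρ‖ ^ 2 = ‖ρ - (g - g_h)‖ ^ 2 + ‖g - g_h‖ ^ 2 := by
      have h := norm_add_sq_real (ρ - (g - g_h)) (g - g_h)
      simp only [sub_add_cancel] at h
      rw [h, hperp]; ring
    nlinarith [norm_nonneg ρ, norm_nonneg (g - g_h), norm_nonneg (ρ - (g - g_h))]
  calc |⟪g - g_h, z⟫| = |⟪g - g_h, ϖ⟫| := by rw [h1, h3]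
    _ ≤ ‖g - g_h‖ * ‖ϖ‖ := abs_real_inner_le_norm _ _
    _ ≤ ‖ρ‖ * ‖ϖ‖ := by
        exact mul_le_mul_of_nonneg_right h4 (norm_nonneg _)
end

section
/- Identity underlying the proposed goal-oriented error approximation η^{ϱϖ}: Let V be a real Hilbert space, G ⊆ V a closed subspace, and S ⊆ G a subspace. Let g, z ∈ G and g_h, z_h ∈ S be such that ⟪g − g_h, v⟫ = 0 for every v ∈ S. Let ϱ, ϖ ∈ V with θ := ϱ − (g − g_h) ∈ G^⊥ and ζ := ϖ − (z − z_h) ∈ G^⊥. Then ⟪g − g_h, z⟫ = ⟪ϱ, ϖ⟫ − ⟪θ, ζ⟫. -/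
open scoped RealInnerProductSpace

/-- Identity underlying the proposed goal-oriented error approximation η^{ϱϖ}. -/
theorem qoi_identity_rho_varpi {V : Type*} [NormedAddCommGroup V]
    [InnerProductSpace ℝ V] [CompleteSpace V]
    (G : Submodule ℝ V) (hG : IsClosed (G : Set V))
    (S : Submodule ℝ V) (hSG : S ≤ G)
    (g z : V) (hg : g ∈ G) (hz : z ∈ G)
    (g_h z_h : V) (hgh : g_h ∈ S) (hzh : z_h ∈ S)
    (hGalerkin : ∀ v ∈ S, ⟪g - g_h, v⟫ = 0)
    (ρ ϖ : V) (θ ζ : V) (hθ : θ = ρ - (g - g_h)) (hζ : ζ = ϖ - (z - z_h))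
    (hθmem : θ ∈ Gᗮ) (hζmem : ζ ∈ Gᗮ) :
    ⟪g - g_h, z⟫ = ⟪ρ, ϖ⟫ - ⟪θ, ζ⟫ := by
  have hρ : ρ = (g - g_h) + θ := by rw [hθ]; abel
  have hϖ : ϖ = (z - z_h) + ζ := by rw [hζ]; abel
  have hggh : g - g_h ∈ G := G.sub_mem hg (hSG hgh)
  have hzzh : z - z_h ∈ G := G.sub_mem hz (hSG hzh)
  have h1 : ⟪g - g_h, ζ⟫ = 0 := (Submodule.mem_orthogonal _ _).mp hζmem _ hggh
  have h2 : ⟪θ, z - z_h⟫ = 0 := by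
    rw [real_inner_comm]
    exact (Submodule.mem_orthogonal _ _).mp hθmem _ hzzh
  have h3 : ⟪g - g_h, z_h⟫ = 0 := hGalerkin _ hzh
  rw [hρ, hϖ, inner_add_left, inner_add_right, inner_add_right, inner_sub_right (𝕜 := ℝ),
    h1, h2, h3]
  ring
end
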